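/- Let h ∈ {1,…,n} satisfy |λ_h|/κ(h) ≤ |λ_j|/κ(j) for all j, and let c = cos(hπ/(n+1)), δ* = 2(n c² δ − (n−1) c σ)/(n−1+2n c²), σ* = ((n−1)σ − n c δ)/(n−1+2n c²), S*^𝒯 = (n; δ*, σ*). Then ‖T − S*^𝒯‖₂ = |λ_h| · (n−1 + 2n|c| cos(π/(n+1))) / (n−1 + 2n c²), and consequently the structured distance to singularity in the spectral norm satisfies min_{j=1,…,n} |λ_j| ≤ d₂^𝒯(T) = min_{S ∈ 𝒮 ∩ 𝒯} ‖T − S‖₂ ≤ |λ_h| · (n−1 + 2n|c| cos(π/(n+1))) / (n−1 + 2n c²). -/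

import Mathlib

open Real Filter

noncomputable def tridiag (n : ℕ) (d s : ℝ) : Matrix (Fin n) (Fin n) ℝ :=
  Matrix.of fun i j =>
    if (i : ℕ) = (j : ℕ) then d
    else if (i : ℕ) + 1 = (j : ℕ) ∨ (j : ℕ) + 1 = (i : ℕ) then s else 0

noncomputable def lam (n : ℕ) (δ σ : ℝ) (h : ℕ) : ℝ :=
  δ + 2 * σ * Real.cos (h * Real.pi / (n + 1))

noncomputable def kap (n h : ℕ) : ℝ :=
  Real.sqrt (1 / (n : ℝ) + 2 / ((n : ℝ) - 1) * Real.cos (h * Real.pi / (n + 1)) ^ 2)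

noncomputable def evec (n h : ℕ) : Fin n → ℝ :=
  fun k => Real.sqrt (2 / (n + 1)) * Real.sin (h * (k.1 + 1) * Real.pi / (n + 1))

noncomputable def frobNorm {n : ℕ} (A : Matrix (Fin n) (Fin n) ℝ) : ℝ :=
  Real.sqrt (∑ i, ∑ j, A i j ^ 2)

/-- Spectral norm (largest singular value) of a real matrix, as the operator norm of the induced
map on Euclidean space. -/
noncomputable def specNorm {n : ℕ} (A : Matrix (Fin n) (Fin n) ℝ) : ℝ :=
  ‖LinearMap.toContinuousLinearMap (Matrix.toEuclideanLin A)‖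

noncomputable def Wf (n h : ℕ) : ℕ → ℝ :=
  fun k => Real.sqrt (2 / (n + 1)) * Real.sin (h * k * Real.pi / (n + 1))

lemma Wf_zero (n h : ℕ) : Wf n h 0 = 0 := by simp [Wf]

lemma Wf_np1 (n h : ℕ) : Wf n h (n + 1) = 0 := by
  have hne : ((n : ℝ) + 1) ≠ 0 := by positivity
  have : (h : ℝ) * (((n : ℕ) + 1 : ℕ) : ℝ) * Real.pi / ((n : ℝ) + 1) = h * Real.pi := by
    push_cast; field_simp
  rw [Wf] at *
  rw [this, Real.sin_nat_mul_pi, mul_zero]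

lemma evec_eq_Wf (n h : ℕ) (k : Fin n) : evec n h k = Wf n h (k.1 + 1) := by
  simp only [evec, Wf]; norm_num

lemma Wf_rec (n h k : ℕ) :
    Wf n h k + Wf n h (k + 2) = 2 * Real.cos (h * Real.pi / (n + 1)) * Wf n h (k + 1) := by
  simp only [Wf]
  set a := (h : ℝ) * ((k : ℝ) + 1) * Real.pi / (n + 1) with ha
  set b := (h : ℝ) * Real.pi / (n + 1) with hb
  have e1 : (h : ℝ) * ((k : ℕ) : ℝ) * Real.pi / (n + 1) = a - b := by rw [ha, hb]; ring
  have e2 : (h : ℝ) * (((k + 2 : ℕ)) : ℝ) * Real.pi / (n + 1) = a + b := by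
    rw [ha, hb]; push_cast; ring
  have e3 : (h : ℝ) * (((k + 1 : ℕ)) : ℝ) * Real.pi / (n + 1) = a := by
    rw [ha]; push_cast; ring
  rw [e1, e2, e3, Real.sin_add, Real.sin_sub]; ring

lemma sum_fin_ite (n : ℕ) (c : ℕ) (A : ℝ) :
    ∑ j : Fin n, (if (j : ℕ) = c then A else 0) = if c < n then A else 0 := by
  split_ifs with hc
  · rw [Finset.sum_eq_single (⟨c, hc⟩ : Fin n)]
    · simp
    · intro b _ hb
      rw [if_neg (by simpa [Fin.ext_iff] using hb)]
    · simp
  · apply Finset.sum_eq_zero; intro j _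
    rw [if_neg (by have := j.isLt; omega)]

lemma tridiag_mulVec (n : ℕ) (d s : ℝ) (h : ℕ) :
    (tridiag n d s).mulVec (evec n h) =
      (d + 2 * s * Real.cos (h * Real.pi / (n + 1))) • evec n h := by
  funext i
  have key : (tridiag n d s).mulVec (evec n h) i
      = s * Wf n h i + d * Wf n h (i + 1) + s * Wf n h (i + 2) := by
    have hpt : ∀ j : Fin n, tridiag n d s i j * evec n h j =
        (if (j : ℕ) + 1 = (i : ℕ) then s * Wf n h i else 0) +
        (if (j : ℕ) = (i : ℕ) then d * Wf n h (i + 1) else 0) +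
        (if (j : ℕ) = (i : ℕ) + 1 then s * Wf n h (i + 2) else 0) := by
      intro j
      rw [evec_eq_Wf]
      simp only [tridiag, Matrix.of_apply]
      rcases Nat.lt_trichotomy (j : ℕ) (i : ℕ) with hlt | heq | hgt
      · by_cases hj1 : (j : ℕ) + 1 = (i : ℕ)
        · have hw : Wf n h ((j : ℕ) + 1) = Wf n h i := by rw [hj1]
          rw [hw, if_neg (show ¬((i : ℕ) = (j : ℕ)) by omega), if_pos (Or.inr hj1),
            if_pos hj1, if_neg (show ¬((j : ℕ) = (i : ℕ)) by omega),
            if_neg (show ¬((j : ℕ) = (i : ℕ) + 1) by omega)]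
          ring
        · rw [if_neg (show ¬((i : ℕ) = (j : ℕ)) by omega),
            if_neg (show ¬((i : ℕ) + 1 = (j : ℕ) ∨ (j : ℕ) + 1 = (i : ℕ)) by omega),
            if_neg hj1, if_neg (show ¬((j : ℕ) = (i : ℕ)) by omega),
            if_neg (show ¬((j : ℕ) = (i : ℕ) + 1) by omega)]
          ring
      · have hw : Wf n h ((j : ℕ) + 1) = Wf n h ((i : ℕ) + 1) := by rw [heq]
        rw [hw, if_pos heq.symm, if_neg (show ¬((j : ℕ) + 1 = (i : ℕ)) by omega),
          if_pos heq, if_neg (show ¬((j : ℕ) = (i : ℕ) + 1) by omega)]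
        ring
      · by_cases hj2 : (j : ℕ) = (i : ℕ) + 1
        · have hw : Wf n h ((j : ℕ) + 1) = Wf n h ((i : ℕ) + 2) := by rw [hj2]
          rw [hw, if_neg (show ¬((i : ℕ) = (j : ℕ)) by omega),
            if_pos (Or.inl (show (i : ℕ) + 1 = (j : ℕ) by omega)),
            if_neg (show ¬((j : ℕ) + 1 = (i : ℕ)) by omega),
            if_neg (show ¬((j : ℕ) = (i : ℕ)) by omega), if_pos hj2]
          ring
        · rw [if_neg (show ¬((i : ℕ) = (j : ℕ)) by omega),
            if_neg (show ¬((i : ℕ) + 1 = (j : ℕ) ∨ (j : ℕ) + 1 = (i : ℕ)) by omega),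
            if_neg (show ¬((j : ℕ) + 1 = (i : ℕ)) by omega),
            if_neg (show ¬((j : ℕ) = (i : ℕ)) by omega), if_neg hj2]
          ring
    simp only [Matrix.mulVec, dotProduct]
    calc ∑ j, tridiag n d s i j * evec n h j = _ := Finset.sum_congr rfl fun j _ => hpt j
    _ = s * Wf n h i + d * Wf n h (i + 1) + s * Wf n h (i + 2) := by
        rw [Finset.sum_add_distrib, Finset.sum_add_distrib]
        have t1 : ∑ j : Fin n, (if (j : ℕ) + 1 = (i : ℕ) then s * Wf n h i else 0)
            = s * Wf n h i := by
          rcases Nat.eq_zero_or_pos (i : ℕ) with h0 | hpos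
          · rw [h0]
            rw [Finset.sum_eq_zero (by intro j _; rw [if_neg (by omega)])]
            rw [Wf_zero, mul_zero]
          · have : ∀ j : Fin n, ((j : ℕ) + 1 = (i : ℕ)) = ((j : ℕ) = (i : ℕ) - 1) := by
              intro j; simp only [eq_iff_iff]; omega
            simp only [this]
            rw [sum_fin_ite, if_pos (by omega)]
        have t2 : ∑ j : Fin n, (if (j : ℕ) = (i : ℕ) then d * Wf n h (i + 1) else 0)
            = d * Wf n h (i + 1) := by rw [sum_fin_ite, if_pos i.2]
        have t3 : ∑ j : Fin n, (if (j : ℕ) = (i : ℕ) + 1 then s * Wf n h (i + 2) else 0)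
            = s * Wf n h (i + 2) := by
          rcases Nat.lt_or_ge ((i : ℕ) + 1) n with hlt | hge
          · rw [sum_fin_ite, if_pos hlt]
          · have hin : (i : ℕ) + 2 = n + 1 := by have := i.2; omega
            rw [sum_fin_ite, if_neg (by omega), hin, Wf_np1]; ring
        rw [t1, t2, t3]
  rw [key, Pi.smul_apply, evec_eq_Wf, smul_eq_mul]
  linear_combination s * Wf_rec n h i

noncomputable def evE (n h : ℕ) : EuclideanSpace ℝ (Fin n) :=
  (WithLp.equiv 2 (Fin n → ℝ)).symm (evec n h)

lemma toEuclideanLin_tridiag_evE (n : ℕ) (d s : ℝ) (h : ℕ) :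
    Matrix.toEuclideanLin (tridiag n d s) (evE n h)
      = (d + 2 * s * Real.cos (h * Real.pi / (n + 1))) • evE n h := by
  rw [evE, WithLp.equiv_symm_apply, Matrix.toEuclideanLin_apply_piLp_toLp, tridiag_mulVec]
  rfl

lemma evE_ne_zero (n h : ℕ) (h1 : 1 ≤ h) (hh : h ≤ n) : evE n h ≠ 0 := by
  intro h0
  have hx : evec n h = 0 := by
    have := congrArg (WithLp.equiv 2 (Fin n → ℝ)) h0
    simpa [evE] using this
  have h2 : evec n h ⟨0, by omega⟩ = 0 := by rw [hx]; rfl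
  have hpos : 0 < evec n h ⟨0, by omega⟩ := by
    simp only [evec]
    have hsq : (0:ℝ) < Real.sqrt (2 / (n + 1)) := Real.sqrt_pos.2 (by positivity)
    have harg : (h : ℝ) * ((0:ℕ) + 1) * Real.pi / (n + 1)
        = (h : ℝ) * Real.pi / (n + 1) := by norm_num
    have hsin : 0 < Real.sin ((h : ℝ) * ((0:ℕ) + 1) * Real.pi / (n + 1)) := by
      rw [harg]
      apply Real.sin_pos_of_pos_of_lt_pi
      · have : (0:ℝ) < (h:ℝ) := by exact_mod_cast h1
        positivity
      · rw [div_lt_iff₀ (by positivity)]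
        have : (h : ℝ) ≤ n := by exact_mod_cast hh
        nlinarith [Real.pi_pos]
    positivity
  rw [h2] at hpos; exact lt_irrefl _ hpos

lemma specNorm_lower (n : ℕ) (d s : ℝ) (j : ℕ) (h1 : 1 ≤ j) (hj : j ≤ n) :
    |d + 2 * s * Real.cos (j * Real.pi / (n + 1))| ≤ specNorm (tridiag n d s) := by
  set μ := d + 2 * s * Real.cos (j * Real.pi / (n + 1)) with hμ
  set F := LinearMap.toContinuousLinearMap (Matrix.toEuclideanLin (tridiag n d s)) with hF
  have hfv : F (evE n j) = μ • evE n j := toEuclideanLin_tridiag_evE n d s j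
  have hvpos : 0 < ‖evE n j‖ := norm_pos_iff.2 (evE_ne_zero n j h1 hj)
  have hle := F.le_opNorm (evE n j)
  rw [hfv, norm_smul, Real.norm_eq_abs] at hle
  have := (mul_le_mul_iff_left₀ hvpos).1 hle
  exact this

lemma mu_inj (n : ℕ) (d s : ℝ) (hs : s ≠ 0) :
    Function.Injective (fun j : Fin n =>
      d + 2 * s * Real.cos (((j.1 + 1 : ℕ) : ℝ) * Real.pi / (n + 1))) := by
  intro j k hjk
  simp only at hjk
  have hcos : Real.cos (((j.1 + 1 : ℕ) : ℝ) * Real.pi / (n + 1))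
      = Real.cos (((k.1 + 1 : ℕ) : ℝ) * Real.pi / (n + 1)) :=
    mul_left_cancel₀ (mul_ne_zero two_ne_zero hs) (by linarith)
  have hmemj : ∀ m : Fin n, ((m.1 + 1 : ℕ) : ℝ) * Real.pi / (n + 1) ∈ Set.Icc 0 Real.pi := by
    intro m
    constructor
    · positivity
    · rw [div_le_iff₀ (by positivity)]
      have h1 : ((m.1 + 1 : ℕ) : ℝ) ≤ (n : ℝ) := by exact_mod_cast m.2
      nlinarith [Real.pi_pos]
  have harg := Real.injOn_cos (hmemj j) (hmemj k) hcos
  have hπ : (0:ℝ) < Real.pi / ((n : ℝ) + 1) := by positivity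
  have e1 : ((j.1 + 1 : ℕ) : ℝ) * Real.pi / (n + 1)
      = ((j.1 + 1 : ℕ) : ℝ) * (Real.pi / ((n : ℝ) + 1)) := by ring
  have e2 : ((k.1 + 1 : ℕ) : ℝ) * Real.pi / (n + 1)
      = ((k.1 + 1 : ℕ) : ℝ) * (Real.pi / ((n : ℝ) + 1)) := by ring
  rw [e1, e2] at harg
  have hv := mul_right_cancel₀ (ne_of_gt hπ) harg
  have hnat : j.1 + 1 = k.1 + 1 := by exact_mod_cast hv
  exact Fin.ext (by omega)

lemma tridiag_isHermitian (n : ℕ) (d s : ℝ) : (tridiag n d s).IsHermitian := by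
  unfold Matrix.IsHermitian
  ext i j
  simp only [Matrix.conjTranspose_apply, star_trivial, tridiag, Matrix.of_apply]
  split_ifs <;> first | rfl | omega

lemma li_evE (n : ℕ) (d s : ℝ) (hs : s ≠ 0) :
    LinearIndependent ℝ (fun j : Fin n => evE n (j.1 + 1)) := by
  apply Module.End.eigenvectors_linearIndependent' (Matrix.toEuclideanLin (tridiag n d s))
    (fun j : Fin n => d + 2 * s * Real.cos (((j.1 + 1 : ℕ) : ℝ) * Real.pi / (n + 1)))
    (mu_inj n d s hs)
  intro j
  constructor
  · rw [Module.End.mem_eigenspace_iff]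
    exact toEuclideanLin_tridiag_evE n d s (j.1 + 1)
  · exact evE_ne_zero n (j.1 + 1) (by omega) (by have := j.2; omega)

lemma tridiag_smul_one (n : ℕ) (d : ℝ) :
    tridiag n d 0 = d • (1 : Matrix (Fin n) (Fin n) ℝ) := by
  ext i j
  simp only [tridiag, Matrix.of_apply, Matrix.smul_apply, Matrix.one_apply, smul_eq_mul]
  by_cases hij : (i : ℕ) = (j : ℕ)
  · rw [if_pos hij, if_pos (Fin.ext hij), mul_one]
  · have hne : i ≠ j := fun hh => hij (by rw [hh])
    rw [if_neg hij, if_neg hne, mul_zero, ite_self]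

lemma tridiag_sub (n : ℕ) (a b a' b' : ℝ) :
    tridiag n a b - tridiag n a' b' = tridiag n (a - a') (b - b') := by
  ext i j
  simp only [Matrix.sub_apply, tridiag, Matrix.of_apply]
  split_ifs <;> ring

lemma norm_sq_sum_smul {n : ℕ} (v : Fin n → EuclideanSpace ℝ (Fin n))
    (horth : ∀ j k : Fin n, j ≠ k → inner ℝ (v j) (v k) = (0 : ℝ)) (c : Fin n → ℝ) :
    ‖∑ j, c j • v j‖ ^ 2 = ∑ j, c j ^ 2 * ‖v j‖ ^ 2 := by
  have key : ∀ j : Fin n, inner ℝ (v j) (∑ k, c k • v k) = c j * ‖v j‖ ^ 2 := by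
    intro j
    rw [inner_sum]
    rw [Finset.sum_eq_single j]
    · rw [real_inner_smul_right, real_inner_self_eq_norm_sq]
    · intro k _ hk
      rw [real_inner_smul_right, horth j k (Ne.symm hk), mul_zero]
    · intro hj; exact absurd (Finset.mem_univ j) hj
  rw [← real_inner_self_eq_norm_sq, sum_inner]
  refine Finset.sum_congr rfl fun j _ => ?_
  rw [real_inner_smul_left, key j]
  ring

lemma orth_evE (n : ℕ) (d s : ℝ) (hs : s ≠ 0) :
    ∀ j k : Fin n, j ≠ k → inner ℝ (evE n (j.1 + 1)) (evE n (k.1 + 1)) = (0 : ℝ) := by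
  intro j k hjk
  set f := Matrix.toEuclideanLin (tridiag n d s) with hf
  set μ : Fin n → ℝ :=
    fun j => d + 2 * s * Real.cos (((j.1 + 1 : ℕ) : ℝ) * Real.pi / (n + 1)) with hμ
  set v : Fin n → EuclideanSpace ℝ (Fin n) := fun j => evE n (j.1 + 1) with hv
  have heig : ∀ m : Fin n, f (v m) = μ m • v m := fun m =>
    toEuclideanLin_tridiag_evE n d s (m.1 + 1)
  have hsym : f.IsSymmetric := Matrix.isHermitian_iff_isSymmetric.1 (tridiag_isHermitian n d s)
  have h1 : μ j * inner ℝ (v j) (v k) = μ k * inner ℝ (v j) (v k) := by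
    calc μ j * inner ℝ (v j) (v k) = inner ℝ (μ j • v j) (v k) := (real_inner_smul_left _ _ _).symm
    _ = inner ℝ (f (v j)) (v k) := by rw [heig j]
    _ = inner ℝ (v j) (f (v k)) := hsym _ _
    _ = inner ℝ (v j) (μ k • v k) := by rw [heig k]
    _ = μ k * inner ℝ (v j) (v k) := real_inner_smul_right _ _ _
  have hne : μ j ≠ μ k := fun e => hjk (mu_inj n d s hs e)
  by_contra hip
  exact hne (mul_right_cancel₀ hip h1)

lemma specNorm_upper (n : ℕ) (hn : 1 ≤ n) (d s B : ℝ) (hB : 0 ≤ B)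
    (hall : ∀ j : ℕ, 1 ≤ j → j ≤ n → |d + 2 * s * Real.cos (j * Real.pi / (n + 1))| ≤ B) :
    specNorm (tridiag n d s) ≤ B := by
  rw [specNorm]
  apply ContinuousLinearMap.opNorm_le_bound _ hB
  intro x
  rw [LinearMap.coe_toContinuousLinearMap']
  rcases eq_or_ne s 0 with hs | hs
  · rw [hs, tridiag_smul_one, map_smul]
    have hid : Matrix.toEuclideanLin (1 : Matrix (Fin n) (Fin n) ℝ) x = x := by
      rw [Matrix.toEuclideanLin_apply]
      simp [Matrix.one_mulVec]
    rw [LinearMap.smul_apply, hid, norm_smul, Real.norm_eq_abs]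
    have hd : |d| ≤ B := by
      have := hall 1 le_rfl hn
      simpa [hs] using this
    exact mul_le_mul_of_nonneg_right hd (norm_nonneg x)
  · set f := Matrix.toEuclideanLin (tridiag n d s) with hf
    set μ : Fin n → ℝ :=
      fun j => d + 2 * s * Real.cos (((j.1 + 1 : ℕ) : ℝ) * Real.pi / (n + 1)) with hμ
    set v : Fin n → EuclideanSpace ℝ (Fin n) := fun j => evE n (j.1 + 1) with hv
    have heig : ∀ m : Fin n, f (v m) = μ m • v m := fun m =>
      toEuclideanLin_tridiag_evE n d s (m.1 + 1)
    haveI : Nonempty (Fin n) := ⟨⟨0, hn⟩⟩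
    have card : Fintype.card (Fin n) = Module.finrank ℝ (EuclideanSpace ℝ (Fin n)) := by
      simp
    let b := basisOfLinearIndependentOfCardEqFinrank (li_evE n d s hs) card
    have hb : ⇑b = v := coe_basisOfLinearIndependentOfCardEqFinrank _ _
    set cx : Fin n → ℝ := fun j => b.repr x j with hcx
    have hxsum : x = ∑ j, cx j • v j := by
      conv_lhs => rw [← b.sum_repr x]
      rw [hb]
    have hfx : f x = ∑ j, (μ j * cx j) • v j := by
      conv_lhs => rw [hxsum]
      rw [map_sum]
      refine Finset.sum_congr rfl fun j _ => ?_
      rw [map_smul, heig j, smul_smul, mul_comm]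
    have horth := orth_evE n d s hs
    have h1 : ‖f x‖ ^ 2 = ∑ j, (μ j * cx j) ^ 2 * ‖v j‖ ^ 2 := by
      rw [hfx, norm_sq_sum_smul v horth]
    have h2 : ‖x‖ ^ 2 = ∑ j, cx j ^ 2 * ‖v j‖ ^ 2 := by
      conv_lhs => rw [hxsum]
      rw [norm_sq_sum_smul v horth]
    have hsq : ‖f x‖ ^ 2 ≤ (B * ‖x‖) ^ 2 := by
      rw [h1, mul_pow, h2, Finset.mul_sum]
      refine Finset.sum_le_sum fun j _ => ?_
      have hμB : |μ j| ≤ B := hall (j.1 + 1) (by omega) (by have := j.2; omega)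
      have habs : |μ j| * |μ j| ≤ B * B := mul_le_mul hμB hμB (abs_nonneg _) hB
      have hsqa : μ j ^ 2 ≤ B ^ 2 := by nlinarith [sq_abs (μ j)]
      nlinarith [sq_nonneg (cx j), sq_nonneg ‖v j‖, mul_nonneg (sq_nonneg (cx j)) (sq_nonneg ‖v j‖)]
    exact (pow_le_pow_iff_left₀ (norm_nonneg _) (by positivity) two_ne_zero).1 hsq

lemma singular_eigen (n : ℕ) (hn : 1 ≤ n) (d s : ℝ)
    (hdet : (tridiag n d s).det = 0) :
    ∃ j : ℕ, 1 ≤ j ∧ j ≤ n ∧ d + 2 * s * Real.cos (j * Real.pi / (n + 1)) = 0 := by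
  rcases eq_or_ne s 0 with hs | hs
  · have hd : d = 0 := by
      rw [hs, tridiag_smul_one, Matrix.det_smul, Matrix.det_one, mul_one] at hdet
      have := pow_eq_zero_iff (n := Fintype.card (Fin n)) (by simp; omega) |>.1 hdet
      exact this
    exact ⟨1, le_rfl, hn, by simp [hd, hs]⟩
  · obtain ⟨x, hx0, hxv⟩ := (Matrix.exists_mulVec_eq_zero_iff).2 hdet
    set xE : EuclideanSpace ℝ (Fin n) := (WithLp.equiv 2 (Fin n → ℝ)).symm x with hxE
    have hxEne : xE ≠ 0 := by
      intro h0
      apply hx0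
      have := congrArg (WithLp.equiv 2 (Fin n → ℝ)) h0
      simpa [hxE] using this
    set f := Matrix.toEuclideanLin (tridiag n d s) with hf
    have hfx0 : f xE = 0 := by
      rw [hf, hxE, WithLp.equiv_symm_apply, Matrix.toEuclideanLin_apply_piLp_toLp, hxv]
      rfl
    set μ : Fin n → ℝ :=
      fun j => d + 2 * s * Real.cos (((j.1 + 1 : ℕ) : ℝ) * Real.pi / (n + 1)) with hμ
    set v : Fin n → EuclideanSpace ℝ (Fin n) := fun j => evE n (j.1 + 1) with hv
    have heig : ∀ m : Fin n, f (v m) = μ m • v m := fun m =>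
      toEuclideanLin_tridiag_evE n d s (m.1 + 1)
    haveI : Nonempty (Fin n) := ⟨⟨0, hn⟩⟩
    have card : Fintype.card (Fin n) = Module.finrank ℝ (EuclideanSpace ℝ (Fin n)) := by
      simp
    let b := basisOfLinearIndependentOfCardEqFinrank (li_evE n d s hs) card
    have hb : ⇑b = v := coe_basisOfLinearIndependentOfCardEqFinrank _ _
    set cx : Fin n → ℝ := fun j => b.repr xE j with hcx
    have hxsum : xE = ∑ j, cx j • v j := by
      conv_lhs => rw [← b.sum_repr xE]
      rw [hb]
    have hfx : (∑ j, (μ j * cx j) • v j) = 0 := by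
      rw [← hfx0]
      conv_rhs => rw [hxsum]
      rw [map_sum]
      refine (Finset.sum_congr rfl fun j _ => ?_).symm
      rw [map_smul, heig j, smul_smul, mul_comm]
    have hallz := linearIndependent_iff'.1 (li_evE n d s hs) Finset.univ
      (fun j => μ j * cx j) hfx
    have hex : ∃ j : Fin n, cx j ≠ 0 := by
      by_contra hz
      push_neg at hz
      apply hxEne
      rw [hxsum]
      refine Finset.sum_eq_zero fun j _ => ?_
      rw [hz j, zero_smul]
    obtain ⟨j, hj⟩ := hex
    have hμ0 : μ j = 0 := by
      have := hallz j (Finset.mem_univ j)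
      rcases mul_eq_zero.1 this with h | h
      · exact h
      · exact absurd h hj
    exact ⟨j.1 + 1, by omega, by have := j.2; omega, hμ0⟩

lemma cos_abs_le (n : ℕ) (j : ℕ) (h1 : 1 ≤ j) (hj : j ≤ n) :
    |Real.cos (j * Real.pi / (n + 1))| ≤ Real.cos (Real.pi / (n + 1)) := by
  have hπ := Real.pi_pos
  have hn1 : (0:ℝ) < (n:ℝ) + 1 := by positivity
  set θ := (j : ℝ) * Real.pi / (n + 1) with hθ
  set a := Real.pi / ((n:ℝ) + 1) with ha
  have hj1 : (1:ℝ) ≤ (j:ℝ) := by exact_mod_cast h1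
  have hjn : (j:ℝ) ≤ (n:ℝ) := by exact_mod_cast hj
  have ha0 : 0 ≤ a := by positivity
  have haθ : a ≤ θ := by
    rw [ha, hθ, div_le_div_iff₀ hn1 hn1]
    nlinarith [mul_nonneg (sub_nonneg.2 hj1) (mul_pos hπ hn1).le]
  have hθπ : θ ≤ Real.pi - a := by
    have h2 : θ ≤ (n:ℝ) * Real.pi / (n + 1) := by
      rw [hθ, div_le_div_iff₀ hn1 hn1]
      nlinarith [mul_nonneg (sub_nonneg.2 hjn) (mul_pos hπ hn1).le]
    have h3 : (n:ℝ) * Real.pi / (n + 1) = Real.pi - a := by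
      rw [ha]; field_simp; ring
    linarith
  have hθ0 : 0 ≤ θ := by positivity
  rw [abs_le]
  constructor
  · have := Real.cos_le_cos_of_nonneg_of_le_pi hθ0 (by linarith : Real.pi - a ≤ Real.pi) hθπ
    rw [Real.cos_pi_sub] at this
    linarith
  · exact Real.cos_le_cos_of_nonneg_of_le_pi ha0 (by linarith) haθ

lemma cos_n_eq (n : ℕ) : Real.cos ((n : ℝ) * Real.pi / (n + 1)) =
    -Real.cos (Real.pi / (n + 1)) := by
  have hn1 : ((n:ℝ) + 1) ≠ 0 := by positivity
  have h3 : (n:ℝ) * Real.pi / (n + 1) = Real.pi - Real.pi / (n + 1) := by field_simp; ring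
  rw [h3, Real.cos_pi_sub]

lemma cos_a_ge (n : ℕ) (hn : 2 ≤ n) : 1 / 2 ≤ Real.cos (Real.pi / (n + 1)) := by
  have hπ := Real.pi_pos
  have hn1 : (0:ℝ) < (n:ℝ) + 1 := by positivity
  have hnr : (2:ℝ) ≤ (n:ℝ) := by exact_mod_cast hn
  have h1 : Real.pi / ((n:ℝ) + 1) ≤ Real.pi / 3 := by
    rw [div_le_div_iff₀ hn1 (by norm_num)]
    nlinarith
  have := Real.cos_le_cos_of_nonneg_of_le_pi (by positivity)
    (by linarith [Real.pi_gt_three] : Real.pi / 3 ≤ Real.pi) h1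
  rw [Real.cos_pi_div_three] at this
  linarith

lemma specNorm_entry (n : ℕ) (hn : 2 ≤ n) (d s : ℝ) :
    |d| ≤ specNorm (tridiag n d s) ∧ |s| ≤ specNorm (tridiag n d s) := by
  set N := specNorm (tridiag n d s) with hN
  set a := Real.pi / ((n:ℝ) + 1) with ha
  have h1 : |d + 2 * s * Real.cos ((1:ℕ) * Real.pi / (n + 1))| ≤ N :=
    specNorm_lower n d s 1 le_rfl (by omega)
  have hn' : |d + 2 * s * Real.cos ((n:ℕ) * Real.pi / (n + 1))| ≤ N :=
    specNorm_lower n d s n (by omega) le_rfl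
  have e1 : ((1:ℕ):ℝ) * Real.pi / (n + 1) = a := by rw [ha]; norm_num
  rw [e1] at h1
  rw [cos_n_eq n] at hn'
  have hca := cos_a_ge n hn
  have hY : |d - 2 * s * Real.cos a| ≤ N := by
    rw [show d + 2 * s * -Real.cos a = d - 2 * s * Real.cos a by ring] at hn'
    exact hn'
  obtain ⟨hX1, hX2⟩ := abs_le.1 h1
  obtain ⟨hY1, hY2⟩ := abs_le.1 hY
  constructor
  · exact abs_le.2 ⟨by linarith, by linarith⟩
  · rcases le_or_gt 0 s with hs | hs
    · have hmul : s * (1/2) ≤ s * Real.cos a := mul_le_mul_of_nonneg_left hca hs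
      rw [abs_of_nonneg hs]; linarith
    · have hmul : s * Real.cos a ≤ s * (1/2) := mul_le_mul_of_nonpos_left hca hs.le
      rw [abs_of_neg hs]; linarith

lemma evec_ne_zero (n h : ℕ) (h1 : 1 ≤ h) (hh : h ≤ n) : evec n h ≠ 0 := by
  intro h0
  apply evE_ne_zero n h h1 hh
  rw [evE, h0]
  rfl

lemma tridiag_decomp (n : ℕ) (a b : ℝ) :
    tridiag n a b = a • tridiag n 1 0 + b • tridiag n 0 1 := by
  ext i j
  simp only [tridiag, Matrix.of_apply, Matrix.add_apply, Matrix.smul_apply, smul_eq_mul]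
  split_ifs <;> ring

lemma specNorm_continuous (n : ℕ) :
    Continuous fun A : Matrix (Fin n) (Fin n) ℝ => specNorm A := by
  have h : (fun A : Matrix (Fin n) (Fin n) ℝ => specNorm A) =
      fun A => ‖((LinearMap.toContinuousLinearMap.toLinearMap.comp
        Matrix.toEuclideanLin.toLinearMap :
        Matrix (Fin n) (Fin n) ℝ →ₗ[ℝ]
          (EuclideanSpace ℝ (Fin n) →L[ℝ] EuclideanSpace ℝ (Fin n)))) A‖ := rfl
  rw [h]
  exact (LinearMap.continuous_of_finiteDimensional _).norm

lemma specNorm_val (n : ℕ) (hn : 2 ≤ n) (L C : ℝ) :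
    specNorm (tridiag n (((n:ℝ) - 1) * L / ((n:ℝ) - 1 + 2 * (n:ℝ) * C ^ 2))
        ((n:ℝ) * C * L / ((n:ℝ) - 1 + 2 * (n:ℝ) * C ^ 2)))
      = |L| * ((n:ℝ) - 1 + 2 * (n:ℝ) * |C| * Real.cos (Real.pi / (n + 1))) /
        ((n:ℝ) - 1 + 2 * (n:ℝ) * C ^ 2) := by
  have hn2 : (2:ℝ) ≤ (n:ℝ) := by exact_mod_cast hn
  set D := (n:ℝ) - 1 + 2 * (n:ℝ) * C ^ 2 with hD
  have hDpos : 0 < D := by nlinarith [sq_nonneg C]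
  set a := Real.pi / ((n:ℝ) + 1) with ha
  have hca0 : (0:ℝ) ≤ Real.cos a := le_trans (by norm_num) (cos_a_ge n hn)
  set d := ((n:ℝ) - 1) * L / D with hd
  set s := (n:ℝ) * C * L / D with hs
  set B := |L| * ((n:ℝ) - 1 + 2 * (n:ℝ) * |C| * Real.cos a) / D with hB
  have hP : (0:ℝ) ≤ (n:ℝ) - 1 + 2 * (n:ℝ) * |C| * Real.cos a := by
    have h0 : (0:ℝ) ≤ 2 * (n:ℝ) * |C| * Real.cos a := by positivity
    linarith
  have hB0 : 0 ≤ B := div_nonneg (mul_nonneg (abs_nonneg _) hP) hDpos.le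
  apply le_antisymm
  · apply specNorm_upper n (by omega) d s B hB0
    intro j hj1 hjn
    have e : d + 2 * s * Real.cos ((j:ℝ) * Real.pi / (n + 1))
        = L * (((n:ℝ) - 1) + 2 * (n:ℝ) * C * Real.cos ((j:ℝ) * Real.pi / (n + 1))) / D := by
      rw [hd, hs]; field_simp
    rw [e, abs_div, abs_of_pos hDpos, abs_mul, hB]
    gcongr |L| * ?_ / D
    have hcb := cos_abs_le n j hj1 hjn
    calc |((n:ℝ) - 1) + 2 * (n:ℝ) * C * Real.cos ((j:ℝ) * Real.pi / (n + 1))|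
        ≤ |(n:ℝ) - 1| + |2 * (n:ℝ) * C * Real.cos ((j:ℝ) * Real.pi / (n + 1))| := abs_add_le _ _
      _ = ((n:ℝ) - 1) + 2 * (n:ℝ) * |C| * |Real.cos ((j:ℝ) * Real.pi / (n + 1))| := by
          rw [abs_of_nonneg (by linarith : (0:ℝ) ≤ (n:ℝ) - 1), abs_mul, abs_mul, abs_mul,
            abs_two, abs_of_nonneg (by positivity : (0:ℝ) ≤ (n:ℝ))]
      _ ≤ ((n:ℝ) - 1) + 2 * (n:ℝ) * |C| * Real.cos a := by
          have h2 : 2 * (n:ℝ) * |C| * |Real.cos ((j:ℝ) * Real.pi / (n + 1))|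
              ≤ 2 * (n:ℝ) * |C| * Real.cos a :=
            mul_le_mul_of_nonneg_left hcb (by positivity)
          linarith
  · rcases le_or_gt 0 C with hC0 | hC0
    · have hlow := specNorm_lower n d s 1 le_rfl (by omega)
      have e1 : ((1:ℕ):ℝ) * Real.pi / (n + 1) = a := by rw [ha]; norm_num
      rw [e1] at hlow
      have e2 : d + 2 * s * Real.cos a
          = L * (((n:ℝ) - 1) + 2 * (n:ℝ) * |C| * Real.cos a) / D := by
        rw [hd, hs, abs_of_nonneg hC0]; field_simp
      rw [e2, abs_div, abs_of_pos hDpos, abs_mul, abs_of_nonneg hP] at hlow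
      exact hlow
    · have hlow := specNorm_lower n d s n (by omega) le_rfl
      rw [cos_n_eq n] at hlow
      have e2 : d + 2 * s * -Real.cos (Real.pi / ((n:ℝ) + 1))
          = L * (((n:ℝ) - 1) + 2 * (n:ℝ) * |C| * Real.cos a) / D := by
        rw [hd, hs, abs_of_neg hC0, ha]; field_simp
      rw [e2, abs_div, abs_of_pos hDpos, abs_mul, abs_of_nonneg hP] at hlow
      exact hlow

/-- if `h` minimizes `|λ_j|/κ(j)`, then
`‖T − S*^𝒯‖₂ = |λ_h|(n−1+2n|c|cos(π/(n+1)))/(n−1+2nc²)`, and the structured distance to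
singularity in the spectral norm satisfies `min_j |λ_j| ≤ d₂^𝒯(T) ≤` that same bound. -/
theorem stmt_10 (n : ℕ) (hn : 2 ≤ n) (δ σ : ℝ) (hσ : σ ≠ 0)
    (h : ℕ) (h1 : 1 ≤ h) (hh : h ≤ n)
    (hmin : ∀ j : ℕ, 1 ≤ j → j ≤ n →
      |lam n δ σ h| / kap n h ≤ |lam n δ σ j| / kap n j)
    (c δs σs : ℝ) (hc : c = Real.cos (h * Real.pi / (n + 1)))
    (hδs : δs = 2 * ((n : ℝ) * c ^ 2 * δ - ((n : ℝ) - 1) * c * σ) /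
      ((n : ℝ) - 1 + 2 * (n : ℝ) * c ^ 2))
    (hσs : σs = (((n : ℝ) - 1) * σ - (n : ℝ) * c * δ) /
      ((n : ℝ) - 1 + 2 * (n : ℝ) * c ^ 2)) :
    specNorm (tridiag n δ σ - tridiag n δs σs) =
      |lam n δ σ h| * ((n : ℝ) - 1 + 2 * (n : ℝ) * |c| * Real.cos (Real.pi / (n + 1))) /
        ((n : ℝ) - 1 + 2 * (n : ℝ) * c ^ 2) ∧
    ∃ d2 : ℝ,
      IsLeast {r : ℝ | ∃ S : Matrix (Fin n) (Fin n) ℝ,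
          S.det = 0 ∧ (∃ d s : ℝ, S = tridiag n d s) ∧
          r = specNorm (tridiag n δ σ - S)} d2 ∧
      ((Finset.Icc 1 n).inf' (Finset.nonempty_Icc.mpr (by omega))
        fun j => |lam n δ σ j|) ≤ d2 ∧
      d2 ≤ |lam n δ σ h| * ((n : ℝ) - 1 + 2 * (n : ℝ) * |c| * Real.cos (Real.pi / (n + 1))) /
        ((n : ℝ) - 1 + 2 * (n : ℝ) * c ^ 2) := by
  have hn2 : (2:ℝ) ≤ (n:ℝ) := by exact_mod_cast hn
  have hDpos : 0 < (n : ℝ) - 1 + 2 * (n : ℝ) * c ^ 2 := by nlinarith [sq_nonneg c]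
  have hDne : ((n : ℝ) - 1 + 2 * (n : ℝ) * c ^ 2) ≠ 0 := ne_of_gt hDpos
  have hL : lam n δ σ h = δ + 2 * σ * c := by rw [lam, hc]
  have hdd : δ - δs = ((n:ℝ) - 1) * lam n δ σ h / ((n : ℝ) - 1 + 2 * (n : ℝ) * c ^ 2) := by
    rw [hδs, hL]; field_simp; ring
  have hsd : σ - σs = (n:ℝ) * c * lam n δ σ h / ((n : ℝ) - 1 + 2 * (n : ℝ) * c ^ 2) := by
    rw [hσs, hL, eq_div_iff hDne, sub_mul, div_mul_cancel₀ _ hDne]; ring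
  have hpart1 : specNorm (tridiag n δ σ - tridiag n δs σs)
      = |lam n δ σ h| * ((n : ℝ) - 1 + 2 * (n : ℝ) * |c| * Real.cos (Real.pi / (n + 1))) /
        ((n : ℝ) - 1 + 2 * (n : ℝ) * c ^ 2) := by
    rw [tridiag_sub, hdd, hsd]
    exact specNorm_val n hn (lam n δ σ h) c
  refine ⟨hpart1, ?_⟩
  -- the singular point
  have hdet0 : (tridiag n δs σs).det = 0 := by
    apply (Matrix.exists_mulVec_eq_zero_iff).1
    refine ⟨evec n h, evec_ne_zero n h h1 hh, ?_⟩
    rw [tridiag_mulVec]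
    have hz : δs + 2 * σs * Real.cos (h * Real.pi / (n + 1)) = 0 := by
      rw [hδs, hσs, ← hc]; field_simp; ring
    rw [hz, zero_smul]
  set φ : ℝ × ℝ → ℝ := fun p => specNorm (tridiag n δ σ - tridiag n p.1 p.2) with hφ
  have hφeq : ∀ p : ℝ × ℝ, φ p = specNorm (tridiag n (δ - p.1) (σ - p.2)) := by
    intro p
    rw [show φ p = specNorm (tridiag n δ σ - tridiag n p.1 p.2) from rfl, tridiag_sub]
  have φcont : Continuous φ := by
    have he : φ = fun p : ℝ × ℝ =>
        specNorm (tridiag n δ σ - (p.1 • tridiag n 1 0 + p.2 • tridiag n 0 1)) := by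
      funext p
      rw [show φ p = specNorm (tridiag n δ σ - tridiag n p.1 p.2) from rfl,
        tridiag_decomp n p.1 p.2]
    rw [he]
    exact (specNorm_continuous n).comp (continuous_const.sub
      ((continuous_fst.smul continuous_const).add (continuous_snd.smul continuous_const)))
  set K : Set (ℝ × ℝ) := {p : ℝ × ℝ | (tridiag n p.1 p.2).det = 0} with hK
  have hKclosed : IsClosed K := by
    have hcont2 : Continuous fun p : ℝ × ℝ => (tridiag n p.1 p.2).det := by
      apply Continuous.matrix_det
      have he : (fun p : ℝ × ℝ => tridiag n p.1 p.2)
          = fun p : ℝ × ℝ => p.1 • tridiag n 1 0 + p.2 • tridiag n 0 1 := by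
        funext p; exact tridiag_decomp n p.1 p.2
      rw [he]
      exact (continuous_fst.smul continuous_const).add (continuous_snd.smul continuous_const)
    exact isClosed_eq hcont2 continuous_const
  have hentry : ∀ p : ℝ × ℝ, |δ - p.1| ≤ φ p ∧ |σ - p.2| ≤ φ p := by
    intro p
    rw [hφeq p]
    exact specNorm_entry n hn _ _
  have hp0K : ((δs, σs) : ℝ × ℝ) ∈ K := hdet0
  set R := max ‖((δs, σs) : ℝ × ℝ)‖ (max |δ| |σ| + φ (δs, σs) + 1) with hR
  have hp0B : ((δs, σs) : ℝ × ℝ) ∈ Metric.closedBall (0 : ℝ × ℝ) R :=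
    mem_closedBall_zero_iff.2 (le_max_left _ _)
  have hKbcpt : IsCompact (K ∩ Metric.closedBall (0 : ℝ × ℝ) R) :=
    (isCompact_closedBall (0 : ℝ × ℝ) R).inter_left hKclosed
  have hKbne : (K ∩ Metric.closedBall (0 : ℝ × ℝ) R).Nonempty := ⟨(δs, σs), hp0K, hp0B⟩
  obtain ⟨pm, hpm, hpmmin⟩ := hKbcpt.exists_isMinOn hKbne φcont.continuousOn
  have hpmle : ∀ p ∈ K ∩ Metric.closedBall (0 : ℝ × ℝ) R, φ pm ≤ φ p :=
    fun p hp => isMinOn_iff.1 hpmmin p hp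
  have hpm0 : φ pm ≤ φ (δs, σs) := hpmle _ ⟨hp0K, hp0B⟩
  have hmin' : ∀ p : ℝ × ℝ, p ∈ K → φ pm ≤ φ p := by
    intro p hp
    by_cases hpR : ‖p‖ ≤ R
    · exact hpmle p ⟨hp, mem_closedBall_zero_iff.2 hpR⟩
    · push_neg at hpR
      have hp1 := (hentry p).1
      have hp2 := (hentry p).2
      have h2 : ‖p‖ ≤ φ p + max |δ| |σ| := by
        rw [Prod.norm_def, Real.norm_eq_abs, Real.norm_eq_abs]
        apply max_le
        · have h3 : |p.1| ≤ |p.1 - δ| + |δ| := by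
            have := abs_add_le (p.1 - δ) δ
            simpa using this
          rw [abs_sub_comm] at h3
          have h4 := le_max_left |δ| |σ|
          linarith
        · have h3 : |p.2| ≤ |p.2 - σ| + |σ| := by
            have := abs_add_le (p.2 - σ) σ
            simpa using this
          rw [abs_sub_comm] at h3
          have h4 := le_max_right |δ| |σ|
          linarith
      have h4 : max |δ| |σ| + φ (δs, σs) + 1 ≤ R := le_max_right _ _
      linarith
  refine ⟨φ pm, ⟨⟨tridiag n pm.1 pm.2, hpm.1, ⟨pm.1, pm.2, rfl⟩, rfl⟩, ?_⟩, ?_, ?_⟩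
  · rintro r ⟨S, hSdet, ⟨dd, ss, rfl⟩, hreq⟩
    rw [hreq]
    exact hmin' (dd, ss) hSdet
  · obtain ⟨j, hj1, hjn, hj0⟩ := singular_eigen n (by omega) pm.1 pm.2 hpm.1
    have h5 : |lam n δ σ j| ≤ φ pm := by
      rw [hφeq pm]
      have hlow := specNorm_lower n (δ - pm.1) (σ - pm.2) j hj1 hjn
      have he : δ - pm.1 + 2 * (σ - pm.2) * Real.cos ((j:ℝ) * Real.pi / (n + 1))
          = lam n δ σ j := by
        rw [lam]; linear_combination -hj0
      rw [he] at hlow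
      exact hlow
    exact le_trans (Finset.inf'_le _ (Finset.mem_Icc.2 ⟨hj1, hjn⟩)) h5
  · calc φ pm ≤ φ (δs, σs) := hpm0
    _ = _ := hpart1
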